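/- Let G = ⊕_{i∈ℤ} ℤ/2ℤ (the group of finitely supported functions from ℤ to ℤ/2ℤ under addition) and, for every integer n ≥ 1, let G_n be the subgroup of G consisting of the functions vanishing outside the interval [−n, n]. Let 𝒯 be the graph whose vertices are the pairs (n, C) where n ≥ 1 and C is a coset in G/G_n, two vertices (n, C) and (m, D) being adjacent if and only if |m − n| = 1 and one of the cosets C, D is contained in the other as subsets of G. Then: (i) 𝒯 is a tree (connected and acyclic); (ii) the action of G on 𝒯 induced by left translation on cosets is purely elliptic (every element of G fixes a vertex); and (iii) the orbits of this action are unbounded: for every vertex v of 𝒯 and every N ∈ ℕ there exists g ∈ G with dist(v, g·v) > N. -/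

import Mathlib

/-- The group `⊕_{i ∈ ℤ} ℤ/2ℤ` of finitely supported functions `ℤ → ℤ/2ℤ`. -/
abbrev Lam : Type := ℤ →₀ ZMod 2

/-- The subgroup `G_n` of functions vanishing outside `[-n, n]`. -/
noncomputable def Gn (n : ℕ) : AddSubgroup Lam where
  carrier := {f : Lam | ∀ i : ℤ, ¬(-(n : ℤ) ≤ i ∧ i ≤ (n : ℤ)) → f i = 0}
  zero_mem' := by intro i _; simp
  add_mem' := by
    intro a b ha hb i hi
    simp [Finsupp.add_apply, ha i hi, hb i hi]
  neg_mem' := by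
    intro a ha i hi
    simp [Finsupp.neg_apply, ha i hi]

/-- The subset of `Lam` corresponding to a coset `C ∈ Lam ⧸ Gn n`. -/
def cosetSet (n : ℕ) (C : Lam ⧸ Gn n) : Set Lam :=
  {g : Lam | (QuotientAddGroup.mk g : Lam ⧸ Gn n) = C}

/-- Vertices: pairs `(n, C)` with `n ≥ 1` and `C` a coset in `Lam ⧸ Gn n`
(encoded with index `n + 1`). -/
def TVert : Type := Σ n : ℕ, Lam ⧸ Gn (n + 1)

/-- The graph `𝒯`: `(n, C)` and `(m, D)` are adjacent iff `|m - n| = 1` and one of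
the cosets `C`, `D` is contained in the other as subsets of `Lam`. -/
def treeGraph : SimpleGraph TVert where
  Adj p q := ((p.1 : ℤ) - (q.1 : ℤ)).natAbs = 1 ∧
    (cosetSet (p.1 + 1) p.2 ⊆ cosetSet (q.1 + 1) q.2 ∨
     cosetSet (q.1 + 1) q.2 ⊆ cosetSet (p.1 + 1) p.2)
  symm := by
    constructor
    rintro ⟨n, C⟩ ⟨m, D⟩ ⟨h1, h2⟩
    exact ⟨by omega, h2.symm⟩
  loopless := by
    constructor
    rintro ⟨n, C⟩ ⟨h1, -⟩
    omega

/-- The action of `Lam` on `𝒯` induced by left translation on cosets. -/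
noncomputable def act (g : Lam) (p : TVert) : TVert :=
  ⟨p.1, QuotientAddGroup.mk g + p.2⟩

lemma Gn_mono {a b : ℕ} (hab : a ≤ b) : Gn a ≤ Gn b := by
  intro f hf i hi
  exact hf i fun hc => hi ⟨by omega, by omega⟩

lemma mk_surj {a : ℕ} (C : Lam ⧸ Gn a) : ∃ x : Lam, (QuotientAddGroup.mk x : Lam ⧸ Gn a) = C :=
  QuotientAddGroup.mk_surjective C

noncomputable def push {a b : ℕ} (hab : a ≤ b) : Lam ⧸ Gn a → Lam ⧸ Gn b :=
  QuotientAddGroup.map (Gn a) (Gn b) (AddMonoidHom.id Lam) (fun x hx => Gn_mono hab hx)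

lemma push_mk {a b : ℕ} (hab : a ≤ b) (x : Lam) :
    push hab (QuotientAddGroup.mk x) = QuotientAddGroup.mk x :=
  QuotientAddGroup.map_mk _ _ _ _ x

lemma push_push {a b c : ℕ} (h1 : a ≤ b) (h2 : b ≤ c) (C : Lam ⧸ Gn a) :
    push h2 (push h1 C) = push (h1.trans h2) C := by
  obtain ⟨x, rfl⟩ := mk_surj C
  simp [push_mk]

lemma push_add {a b : ℕ} (hab : a ≤ b) (C D : Lam ⧸ Gn a) :
    push hab (C + D) = push hab C + push hab D := by
  obtain ⟨x, rfl⟩ := mk_surj C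
  obtain ⟨y, rfl⟩ := mk_surj D
  rw [← QuotientAddGroup.mk_add, push_mk, push_mk, push_mk, QuotientAddGroup.mk_add]

lemma cosetSet_subset_iff {a b : ℕ} (hab : a ≤ b) (C : Lam ⧸ Gn a) (D : Lam ⧸ Gn b) :
    cosetSet a C ⊆ cosetSet b D ↔ D = push hab C := by
  constructor
  · intro hsub
    obtain ⟨x, rfl⟩ := mk_surj C
    have hx : x ∈ cosetSet a (QuotientAddGroup.mk x) := rfl
    have := hsub hx
    rw [push_mk]
    exact this.symm
  · rintro rfl x hx
    have hx' : (QuotientAddGroup.mk x : Lam ⧸ Gn a) = C := hx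
    subst hx'
    exact (push_mk hab x).symm

lemma single_mem_Gn_iff {m : ℤ} {a : ℕ} :
    Finsupp.single m (1 : ZMod 2) ∈ Gn a ↔ (-(a:ℤ) ≤ m ∧ m ≤ a) := by
  constructor
  · intro h
    by_contra hc
    have := h m hc
    rw [Finsupp.single_eq_same] at this
    exact one_ne_zero this
  · intro hm i hi
    exact Finsupp.single_eq_of_ne (by rintro rfl; exact hi hm)

lemma not_cosetSet_subset {a b : ℕ} (hab : a < b) (C : Lam ⧸ Gn a) (D : Lam ⧸ Gn b) :
    ¬ cosetSet b D ⊆ cosetSet a C := by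
  intro hsub
  obtain ⟨x, rfl⟩ := mk_surj D
  set e : Lam := Finsupp.single (b : ℤ) 1 with he_def
  have he : e ∈ Gn b := single_mem_Gn_iff.mpr ⟨by omega, by omega⟩
  have hx : x ∈ cosetSet b (QuotientAddGroup.mk x) := rfl
  have hxe : x + e ∈ cosetSet b (QuotientAddGroup.mk x) := by
    show (QuotientAddGroup.mk (x + e) : Lam ⧸ Gn b) = QuotientAddGroup.mk x
    rw [QuotientAddGroup.eq_iff_sub_mem]
    simpa using he
  have h1 : (QuotientAddGroup.mk x : Lam ⧸ Gn a) = C := hsub hx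
  have h2 : (QuotientAddGroup.mk (x + e) : Lam ⧸ Gn a) = C := hsub hxe
  have : e ∈ Gn a := by
    have := h2.trans h1.symm
    rw [QuotientAddGroup.eq_iff_sub_mem] at this
    simpa using this
  rw [single_mem_Gn_iff] at this
  omega

noncomputable def parent (p : TVert) : TVert :=
  ⟨p.1 + 1, push (Nat.le_succ _) p.2⟩

lemma parent_fst (p : TVert) : (parent p).1 = p.1 + 1 := rfl

lemma parent_mk (k : ℕ) (x : Lam) :
    parent ⟨k, QuotientAddGroup.mk x⟩ = ⟨k + 1, QuotientAddGroup.mk x⟩ := by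
  show Sigma.mk (k+1) _ = _
  exact congrArg (Sigma.mk (k+1)) (push_mk _ x)

lemma adj_parent (p : TVert) : treeGraph.Adj p (parent p) := by
  obtain ⟨n, C⟩ := p
  refine ⟨?_, Or.inl ?_⟩
  · show ((n:ℤ) - ((n+1 : ℕ):ℤ)).natAbs = 1
    push_cast; omega
  · exact (cosetSet_subset_iff (Nat.le_succ _) _ _).mpr rfl

lemma adj_iff {p q : TVert} : treeGraph.Adj p q ↔ q = parent p ∨ p = parent q := by
  constructor
  · intro h
    obtain ⟨n, C⟩ := p; obtain ⟨m, D⟩ := q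
    obtain ⟨h1, h2⟩ := h
    replace h1 : ((n:ℤ) - (m:ℤ)).natAbs = 1 := h1
    replace h2 : cosetSet (n+1) C ⊆ cosetSet (m+1) D ∨
        cosetSet (m+1) D ⊆ cosetSet (n+1) C := h2
    have hnm : m = n + 1 ∨ n = m + 1 := by omega
    rcases hnm with rfl | rfl
    · left
      rcases h2 with h2 | h2
      · rw [cosetSet_subset_iff (by omega)] at h2
        rw [h2]; rfl
      · exact absurd h2 (not_cosetSet_subset (by omega) _ _)
    · right
      rcases h2 with h2 | h2
      · exact absurd h2 (not_cosetSet_subset (by omega) _ _)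
      · rw [cosetSet_subset_iff (by omega)] at h2
        rw [h2]; rfl
  · rintro (h | h)
    · rw [h]; exact adj_parent p
    · rw [h]; exact (adj_parent q).symm

lemma act_act_neg (g : Lam) (p : TVert) : act (-g) (act g p) = p := by
  obtain ⟨n, C⟩ := p
  show (⟨n, QuotientAddGroup.mk (-g) + (QuotientAddGroup.mk g + C)⟩ : TVert) = ⟨n, C⟩
  refine congrArg (Sigma.mk n) ?_
  have : (QuotientAddGroup.mk (-g) : Lam ⧸ Gn (n+1)) + (QuotientAddGroup.mk g + C) = C := by
    rw [← add_assoc, ← QuotientAddGroup.mk_add, neg_add_cancel, QuotientAddGroup.mk_zero]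
    exact zero_add C
  exact this

lemma act_parent (g : Lam) (p : TVert) : act g (parent p) = parent (act g p) := by
  obtain ⟨n, C⟩ := p
  unfold act parent
  dsimp only
  rw [push_add, push_mk]

lemma act_inj (g : Lam) {p q : TVert} (h : act g p = act g q) : p = q := by
  have := congrArg (act (-g)) h
  rwa [act_act_neg, act_act_neg] at this

lemma adj_act (g : Lam) {p q : TVert} (h : treeGraph.Adj p q) :
    treeGraph.Adj (act g p) (act g q) := by
  rw [adj_iff] at h ⊢
  rcases h with rfl | rfl
  · exact Or.inl (act_parent g p)
  · exact Or.inr (act_parent g q)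

lemma reach_up (n k : ℕ) (x : Lam) :
    treeGraph.Reachable ⟨n, QuotientAddGroup.mk x⟩ ⟨n + k, QuotientAddGroup.mk x⟩ := by
  induction k with
  | zero => exact SimpleGraph.Reachable.refl _
  | succ k ih =>
    refine ih.trans ?_
    have h := (adj_parent ⟨n + k, QuotientAddGroup.mk x⟩).reachable
    rwa [parent_mk] at h

lemma reach_up' {n K : ℕ} (h : n ≤ K) (x : Lam) :
    treeGraph.Reachable ⟨n, QuotientAddGroup.mk x⟩ ⟨K, QuotientAddGroup.mk x⟩ := by
  obtain ⟨k, rfl⟩ := Nat.exists_eq_add_of_le h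
  exact reach_up n k x

lemma exists_mem_Gn (x : Lam) : ∃ B : ℕ, ∀ K, B ≤ K → x ∈ Gn K := by
  refine ⟨x.support.sup Int.natAbs, fun K hK i hi => ?_⟩
  by_contra hx
  have hi' : i ∈ x.support := Finsupp.mem_support_iff.mpr hx
  have := Finset.le_sup (f := Int.natAbs) hi'
  omega

lemma tree_connected : treeGraph.Connected := by
  rw [SimpleGraph.connected_iff]
  refine ⟨fun p q => ?_, ⟨⟨0, 0⟩⟩⟩
  obtain ⟨n, C⟩ := p; obtain ⟨m, D⟩ := q
  obtain ⟨x, rfl⟩ := mk_surj C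
  obtain ⟨y, rfl⟩ := mk_surj D
  obtain ⟨Bx, hBx⟩ := exists_mem_Gn x
  obtain ⟨By, hBy⟩ := exists_mem_Gn y
  set K := n + m + Bx + By with hK
  have h1 := reach_up' (by omega : n ≤ K) x
  have h2 := reach_up' (by omega : m ≤ K) y
  have hxy : (QuotientAddGroup.mk x : Lam ⧸ Gn (K + 1)) = QuotientAddGroup.mk y := by
    rw [QuotientAddGroup.eq_iff_sub_mem]
    exact AddSubgroup.sub_mem _ (hBx _ (by omega)) (hBy _ (by omega))
  rw [hxy] at h1
  exact h1.trans h2.symm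

lemma parent_ne_aux {w u : TVert} (h : treeGraph.Adj w u) (hle : w.1 ≤ u.1) :
    u = parent w := by
  rcases adj_iff.mp h with h' | h'
  · exact h'
  · have : w.1 = u.1 + 1 := congrArg Sigma.fst h'
    omega

lemma no_min_cycle (w : TVert) (c : treeGraph.Walk w w) (hc : c.IsCycle)
    (hmin : ∀ u ∈ c.support, w.1 ≤ u.1) : False := by
  cases c with
  | nil => simpa using hc.three_le_length
  | @cons _ u _ h q =>
    have hlen : 3 ≤ q.length + 1 := by simpa using hc.three_le_length
    have hu : u = parent w := by
      refine parent_ne_aux h (hmin u ?_)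
      simp [SimpleGraph.Walk.support_cons, q.start_mem_support]
    have hnd : q.support.Nodup := hc.support_nodup
    cases q with
    | nil => simp at hlen
    | @cons _ z _ h2 q2 =>
      obtain ⟨x, r, h', hcat⟩ := SimpleGraph.Walk.exists_cons_eq_concat h2 q2
      have hxmem : x ∈ (SimpleGraph.Walk.cons h2 q2).support := by
        rw [hcat, SimpleGraph.Walk.support_concat]
        exact List.mem_append.mpr (Or.inl r.end_mem_support)
      have hx : x = parent w := by
        refine parent_ne_aux h'.symm (hmin x ?_)
        rw [SimpleGraph.Walk.support_cons]
        exact List.mem_cons_of_mem _ hxmem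
      have hrlen : r.length = q2.length := by
        have := congrArg SimpleGraph.Walk.length hcat
        rw [SimpleGraph.Walk.length_concat] at this
        simpa using this.symm
      have hrnd : r.support.Nodup := by
        rw [hcat, SimpleGraph.Walk.support_concat,
          List.nodup_append] at hnd
        exact hnd.1
      have hq2 : 1 ≤ q2.length := by
        rw [SimpleGraph.Walk.length_cons] at hlen; omega
      subst hx
      subst hu
      cases r with
      | nil => simp at hrlen; omega
      | @cons _ z' _ h3 r3 =>
        rw [SimpleGraph.Walk.support_cons, List.nodup_cons] at hrnd
        exact hrnd.1 r3.end_mem_support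

lemma tree_acyclic : treeGraph.IsAcyclic := by
  intro v c hc
  classical
  have hne : c.support.toFinset.Nonempty := by
    simp [List.toFinset_nonempty_iff, c.support_ne_nil]
  obtain ⟨w, hw, hmin⟩ := Finset.exists_min_image c.support.toFinset (fun u => u.1) hne
  rw [List.mem_toFinset] at hw
  refine no_min_cycle w (c.rotate w hw) (hc.rotate hw) (fun u hu => ?_)
  rw [SimpleGraph.Walk.support_eq_cons, List.mem_cons] at hu
  rcases hu with rfl | hu
  · exact le_refl _
  · have hperm := SimpleGraph.Walk.support_rotate c w hw
    have : u ∈ c.support.tail := hperm.mem_iff.mp hu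
    exact hmin u (List.mem_toFinset.mpr (List.mem_of_mem_tail this))

lemma tree_istree : treeGraph.IsTree := ⟨tree_connected, tree_acyclic⟩

noncomputable def top (b : ℕ) (v : TVert) : Lam ⧸ Gn b :=
  QuotientAddGroup.mk (Quotient.out v.2)

lemma top_mk {b k : ℕ} (h : k + 1 ≤ b) (x : Lam) :
    top b ⟨k, QuotientAddGroup.mk x⟩ = QuotientAddGroup.mk x := by
  have h1 : (QuotientAddGroup.mk
      (Quotient.out (QuotientAddGroup.mk x : Lam ⧸ Gn (k+1))) : Lam ⧸ Gn (k+1)) =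
      QuotientAddGroup.mk x := QuotientAddGroup.out_eq' _
  rw [QuotientAddGroup.eq_iff_sub_mem] at h1
  show (QuotientAddGroup.mk (Quotient.out (QuotientAddGroup.mk x : Lam ⧸ Gn (k+1))) : Lam ⧸ Gn b)
    = QuotientAddGroup.mk x
  rw [QuotientAddGroup.eq_iff_sub_mem]
  exact Gn_mono h h1

open scoped Classical in
noncomputable def psi (n N : ℕ) (C : Lam ⧸ Gn (n+1)) (v : TVert) : ℤ :=
  if v.1 ≤ n + N then
    (if top (n+N+1) v = top (n+N+1) ⟨n, C⟩ then (v.1 : ℤ) - ((n:ℤ) + N + 1)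
     else if top (n+N+1) v =
         QuotientAddGroup.mk (Finsupp.single ((n:ℤ) + (N:ℤ) + 2) (1 : ZMod 2)) + top (n+N+1) ⟨n, C⟩
       then ((n:ℤ) + N + 1) - (v.1 : ℤ)
     else 0)
  else 0

lemma psi_parent (n N : ℕ) (C : Lam ⧸ Gn (n+1)) (p : TVert) :
    |psi n N C p - psi n N C (parent p)| ≤ 1 := by
  obtain ⟨k, D⟩ := p
  obtain ⟨x, rfl⟩ := mk_surj D
  rw [parent_mk]
  by_cases hk1 : k + 1 ≤ n + N
  · have e1 : top (n+N+1) ⟨k, QuotientAddGroup.mk x⟩ = QuotientAddGroup.mk x :=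
      top_mk (by omega) x
    have e2 : top (n+N+1) ⟨k+1, QuotientAddGroup.mk x⟩ = QuotientAddGroup.mk x :=
      top_mk (by omega) x
    simp only [psi]
    rw [e1, e2, if_pos (show k ≤ n + N by omega), if_pos hk1]
    split_ifs <;> rw [abs_sub_le_iff] <;> constructor <;> push_cast <;> omega
  · by_cases hk0 : k ≤ n + N
    · have e1 : top (n+N+1) ⟨k, QuotientAddGroup.mk x⟩ = QuotientAddGroup.mk x :=
        top_mk (by omega) x
      simp only [psi]
      rw [e1, if_pos hk0, if_neg hk1]
      split_ifs <;> rw [abs_sub_le_iff] <;> constructor <;> push_cast <;> omega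
    · simp only [psi]
      rw [if_neg hk0, if_neg (show ¬ (k + 1 ≤ n + N) from hk1)]
      simp

lemma psi_adj (n N : ℕ) (C : Lam ⧸ Gn (n+1)) {p q : TVert} (h : treeGraph.Adj p q) :
    |psi n N C p - psi n N C q| ≤ 1 := by
  rcases adj_iff.mp h with rfl | rfl
  · exact psi_parent n N C p
  · rw [abs_sub_comm]
    exact psi_parent n N C q

lemma psi_walk (n N : ℕ) (C : Lam ⧸ Gn (n+1)) {p q : TVert} (w : treeGraph.Walk p q) :
    |psi n N C p - psi n N C q| ≤ (w.length : ℤ) := by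
  induction w with
  | nil => simp
  | @cons a b c hadj w ih =>
    have h1 := psi_adj n N C hadj
    have h2 := abs_sub_le (psi n N C a) (psi n N C b) (psi n N C c)
    rw [SimpleGraph.Walk.length_cons]
    push_cast
    omega

/-- `𝒯` is a tree, the translation action of `Lam = ⊕_ℤ ℤ/2ℤ` on it is an action by
graph automorphisms which is purely elliptic, yet all its orbits are unbounded. -/
theorem torsion_group_acts_purely_elliptically_with_unbounded_orbits :
    treeGraph.IsTree ∧
      (∀ (g : Lam) (p q : TVert), treeGraph.Adj p q ↔ treeGraph.Adj (act g p) (act g q)) ∧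
      (∀ g : Lam, ∃ p : TVert, act g p = p) ∧
      (∀ p : TVert, ∀ N : ℕ, ∃ g : Lam, N < treeGraph.dist p (act g p)) := by
  refine ⟨tree_istree, fun g p q => ⟨adj_act g, fun h => ?_⟩, fun g => ?_, fun p N => ?_⟩
  · have h2 := adj_act (-g) h
    rwa [act_act_neg, act_act_neg] at h2
  · obtain ⟨B, hB⟩ := exists_mem_Gn g
    refine ⟨⟨B, 0⟩, ?_⟩
    show (⟨B, QuotientAddGroup.mk g + 0⟩ : TVert) = ⟨B, 0⟩
    refine congrArg (Sigma.mk B) ?_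
    have h0 : (QuotientAddGroup.mk g : Lam ⧸ Gn (B+1)) = 0 :=
      (QuotientAddGroup.eq_zero_iff g).mpr (hB _ (by omega))
    rw [h0]
    exact add_zero (0 : Lam ⧸ Gn (B+1))
  · obtain ⟨n, C⟩ := p
    obtain ⟨x, rfl⟩ := mk_surj C
    set g : Lam := Finsupp.single ((n:ℤ) + (N:ℤ) + 2) (1 : ZMod 2) with hg
    have hgx : g ∉ Gn (n + N + 1) := by
      rw [hg, single_mem_Gn_iff]
      push_cast
      omega
    refine ⟨g, ?_⟩
    have hq : act g ⟨n, QuotientAddGroup.mk x⟩ =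
        ⟨n, QuotientAddGroup.mk (g + x)⟩ := by
      refine congrArg (Sigma.mk n) ?_
      rw [QuotientAddGroup.mk_add]
    have hp : psi n N (QuotientAddGroup.mk x) ⟨n, QuotientAddGroup.mk x⟩ =
        (n : ℤ) - ((n:ℤ) + N + 1) := by
      simp only [psi]
      rw [if_pos (show n ≤ n + N by omega)]
      simp
    have hqv : psi n N (QuotientAddGroup.mk x) ⟨n, QuotientAddGroup.mk (g + x)⟩ =
        ((n:ℤ) + N + 1) - (n : ℤ) := by
      have e1 : top (n+N+1) ⟨n, QuotientAddGroup.mk (g + x)⟩ =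
          QuotientAddGroup.mk (g + x) := top_mk (by omega) _
      have e2 : top (n+N+1) ⟨n, QuotientAddGroup.mk x⟩ =
          QuotientAddGroup.mk x := top_mk (by omega) _
      have hne : (QuotientAddGroup.mk (g + x) : Lam ⧸ Gn (n+N+1)) ≠ QuotientAddGroup.mk x := by
        rw [Ne, QuotientAddGroup.eq_iff_sub_mem]
        simpa using hgx
      have heq : (QuotientAddGroup.mk (g + x) : Lam ⧸ Gn (n+N+1)) =
          QuotientAddGroup.mk g + QuotientAddGroup.mk x := by
        rw [QuotientAddGroup.mk_add]
      simp only [psi]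
      rw [e1, e2, if_pos (show n ≤ n + N by omega), if_neg hne, if_pos (by rw [heq])]
    rw [hq]
    obtain ⟨wlk, hwlk⟩ := tree_connected.exists_walk_length_eq_dist
      ⟨n, QuotientAddGroup.mk x⟩ (⟨n, QuotientAddGroup.mk (g + x)⟩ : TVert)
    have hb := psi_walk n N (QuotientAddGroup.mk x) wlk
    rw [hwlk, hp, hqv] at hb
    have habs : |(n : ℤ) - ((n:ℤ) + N + 1) - (((n:ℤ) + N + 1) - (n : ℤ))| = 2*N + 2 := by
      rw [abs_of_nonpos (by omega)]
      omega
    rw [habs] at hb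
    omega
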